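/- arXiv:2605.23252 — 4 statements merged into one kernel-verified Lean document; each statement's English description precedes it below -/
import Mathlib

section
/- For every real number μ < 0 and every s ∈ (0,1), the improper integral ∫₀^∞ μ t^{s-1}/(t-μ) dt converges and equals -π csc(π s) (-μ)^s. -/
open Real MeasureTheory Set

lemma beta_real (s : ℝ) (h0 : 0 < s) (h1 : s < 1) :
    IntegrableOn (fun x : ℝ => x ^ (s - 1) * (1 - x) ^ (-s)) (Ioo 0 1) volume ∧
    ∫ x in Ioo (0:ℝ) 1, x ^ (s - 1) * (1 - x) ^ (-s) = π / Real.sin (π * s) := by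
  have hre : 0 < Complex.re (s : ℂ) := by simpa using h0
  have hre' : 0 < Complex.re (1 - (s : ℂ)) := by simp [h1]
  have hBval : Complex.betaIntegral s (1 - s) = ↑π / Complex.sin (π * s) := by
    have h := Complex.Gamma_mul_Gamma_eq_betaIntegral hre hre'
    rw [show (s : ℂ) + (1 - s) = 1 by ring, Complex.Gamma_one, one_mul] at h
    rw [← h, Complex.Gamma_mul_Gamma_one_sub]
  -- pointwise equality on Ioo 0 1
  have hEq : ∀ x ∈ Ioo (0:ℝ) 1,
      (x : ℂ) ^ ((s : ℂ) - 1) * (1 - (x : ℂ)) ^ ((1 - (s : ℂ)) - 1)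
        = ((x ^ (s - 1) * (1 - x) ^ (-s) : ℝ) : ℂ) := by
    intro x hx
    rw [show ((s : ℂ) - 1) = ((s - 1 : ℝ) : ℂ) by push_cast; ring,
      show ((1 - (s : ℂ)) - 1) = ((-s : ℝ) : ℂ) by push_cast; ring,
      show (1 - (x : ℂ)) = ((1 - x : ℝ) : ℂ) by push_cast; ring,
      ← Complex.ofReal_cpow hx.1.le, ← Complex.ofReal_cpow (by linarith [hx.2]), Complex.ofReal_mul]
  have hInt : IntegrableOn (fun x : ℝ => (x : ℂ) ^ ((s : ℂ) - 1) * (1 - (x : ℂ)) ^ ((1 - (s : ℂ)) - 1)) (Ioo 0 1) volume :=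
    ((Complex.betaIntegral_convergent hre hre').1.mono_set Ioo_subset_Ioc_self)
  have hIntR : IntegrableOn (fun x : ℝ => x ^ (s - 1) * (1 - x) ^ (-s)) (Ioo 0 1) volume := by
    have := hInt.re
    refine MeasureTheory.IntegrableOn.congr_fun this (fun x hx => ?_) measurableSet_Ioo
    rw [hEq x hx]; simp
  refine ⟨hIntR, ?_⟩
  have hBint : Complex.betaIntegral s (1 - s)
      = ∫ x in Ioo (0:ℝ) 1, (x : ℂ) ^ ((s : ℂ) - 1) * (1 - (x : ℂ)) ^ ((1 - (s : ℂ)) - 1) := by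
    rw [Complex.betaIntegral, intervalIntegral.integral_of_le zero_le_one,
      MeasureTheory.integral_Ioc_eq_integral_Ioo]
  have this : ((∫ x in Ioo (0:ℝ) 1, x ^ (s - 1) * (1 - x) ^ (-s) : ℝ) : ℂ) = ↑π / Complex.sin (π * s) := by
    have key : (∫ x in Ioo (0:ℝ) 1, ((x ^ (s - 1) * (1 - x) ^ (-s) : ℝ) : ℂ)) = ↑π / Complex.sin (π * s) := by
      rw [← setIntegral_congr_fun measurableSet_Ioo hEq, ← hBint, hBval]
    rw [← key]
    exact (integral_ofReal (𝕜 := ℂ)).symm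
  have hsin : Complex.sin (π * s) = ((Real.sin (π * s) : ℝ) : ℂ) := by
    push_cast; ring
  rw [hsin, ← Complex.ofReal_div] at this
  exact_mod_cast this

theorem balakrishnan_scalar_integral (μ s : ℝ) (hμ : μ < 0) (hs : s ∈ Set.Ioo (0:ℝ) 1) :
    IntegrableOn (fun t : ℝ => μ * t ^ (s - 1) / (t - μ)) (Set.Ioi 0) volume ∧
    ∫ t in Set.Ioi (0:ℝ), μ * t ^ (s - 1) / (t - μ) = -π * (Real.sin (π * s))⁻¹ * (-μ) ^ s := by
  obtain ⟨hs0, hs1⟩ := hs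
  set a : ℝ := -μ with ha_def
  have ha : 0 < a := by simp [ha_def]; linarith
  set f : ℝ → ℝ := fun x => a * x / (1 - x) with hf_def
  set f' : ℝ → ℝ := fun x => a / (1 - x) ^ 2 with hf'_def
  have hderiv : ∀ x ∈ Ioo (0:ℝ) 1, HasDerivWithinAt f (f' x) (Ioo 0 1) x := by
    intro x hx
    have hx1 : (1:ℝ) - x ≠ 0 := by have := hx.2; intro h; linarith [sub_eq_zero.mp h]
    have h1 : HasDerivAt (fun y : ℝ => a * y) a x := by
      simpa using (hasDerivAt_id x).const_mul a
    have h2 : HasDerivAt (fun y : ℝ => 1 - y) (-1) x := by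
      simpa using (hasDerivAt_id x).const_sub (1:ℝ)
    have h3 := h1.div h2 hx1
    have heq : (a * (1 - x) - a * x * (-1)) / (1 - x) ^ 2 = f' x := by
      rw [hf'_def]; field_simp; ring
    exact (heq ▸ h3).hasDerivWithinAt
  have hinj : InjOn f (Ioo 0 1) := by
    intro x hx y hy h
    have hx1 : (1:ℝ) - x ≠ 0 := by have := hx.2; intro hc; linarith [sub_eq_zero.mp hc]
    have hy1 : (1:ℝ) - y ≠ 0 := by have := hy.2; intro hc; linarith [sub_eq_zero.mp hc]
    rw [hf_def] at h; simp only [div_eq_div_iff hx1 hy1] at h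
    have h2 : a * (x - y) = 0 := by linear_combination h
    rcases mul_eq_zero.mp h2 with h3 | h3
    · exact absurd h3 ha.ne'
    · linarith
  have himg : f '' Ioo 0 1 = Ioi 0 := by
    ext t
    simp only [Set.mem_image, Set.mem_Ioo, Set.mem_Ioi]
    constructor
    · rintro ⟨x, ⟨h0, h1⟩, rfl⟩
      exact div_pos (mul_pos ha h0) (by linarith)
    · intro ht
      have hta : t + a ≠ 0 := by positivity
      refine ⟨t / (t + a), ⟨by positivity, by rw [div_lt_one (by positivity)]; linarith⟩, ?_⟩
      rw [hf_def]
      field_simp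
      rw [show t + a - t = a by ring, div_self ha.ne']
  -- the transformed integrand
  have hpt : ∀ x ∈ Ioo (0:ℝ) 1,
      |f' x| • (μ * (f x) ^ (s - 1) / (f x - μ)) = -a ^ s * (x ^ (s - 1) * (1 - x) ^ (-s)) := by
    intro x hx
    obtain ⟨h0, h1⟩ := hx
    have h1x : (0:ℝ) < 1 - x := by linarith
    have hfx : f x = a * x / (1 - x) := rfl
    have hpow : (f x) ^ (s - 1) = a ^ (s - 1) * x ^ (s - 1) * ((1 - x) ^ (s - 1))⁻¹ := by
      rw [hfx, Real.div_rpow (by positivity) h1x.le, Real.mul_rpow ha.le h0.le, div_eq_mul_inv]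
    have hsub : f x - μ = a / (1 - x) := by
      rw [hfx, ha_def]; field_simp; ring
    rw [smul_eq_mul, hpow, hsub, abs_of_pos (by positivity : (0:ℝ) < f' x), hf'_def]
    have hμa : μ = -a := by rw [ha_def]; ring
    rw [hμa]
    have e1 : a ^ s = a ^ (s - 1) * a := by
      rw [← Real.rpow_add_one ha.ne' (s - 1)]; norm_num
    have e2 : (1 - x) ^ s = (1 - x) ^ (s - 1) * (1 - x) := by
      rw [← Real.rpow_add_one h1x.ne' (s - 1)]; norm_num
    have hne : (1 - x) ^ (s - 1) ≠ 0 := (Real.rpow_pos_of_pos h1x _).ne'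
    rw [Real.rpow_neg h1x.le, e1, e2]
    field_simp
  obtain ⟨hBint, hBval⟩ := beta_real s hs0 hs1
  have hIff := integrableOn_image_iff_integrableOn_abs_deriv_smul measurableSet_Ioo hderiv hinj
      (fun t : ℝ => μ * t ^ (s - 1) / (t - μ))
  rw [himg] at hIff
  have hint2 : IntegrableOn (fun x => |f' x| • (μ * (f x) ^ (s - 1) / (f x - μ))) (Ioo 0 1) volume := by
    refine MeasureTheory.IntegrableOn.congr_fun ((hBint.const_mul (-a ^ s))) (fun x hx => ?_) measurableSet_Ioo
    exact (hpt x hx).symm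
  have hint : IntegrableOn (fun t : ℝ => μ * t ^ (s - 1) / (t - μ)) (Ioi 0) volume := hIff.mpr hint2
  refine ⟨hint, ?_⟩
  have hchg := integral_image_eq_integral_abs_deriv_smul measurableSet_Ioo hderiv hinj
      (fun t : ℝ => μ * t ^ (s - 1) / (t - μ))
  rw [himg] at hchg
  rw [hchg, setIntegral_congr_fun measurableSet_Ioo hpt, integral_const_mul, hBval]
  have hsin : Real.sin (π * s) ≠ 0 := by
    have h1 : 0 < π * s := by positivity
    have h2 : π * s < π := by nlinarith [Real.pi_pos]
    exact ne_of_gt (Real.sin_pos_of_pos_of_lt_pi h1 h2)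
  rw [div_eq_mul_inv]
  ring
end

section
/- For every real number μ < 0 and every s ∈ (0,1), the improper integral ∫₀^∞ (e^{μ t} - 1)/t^{1+s} dt converges and equals Γ(-s) (-μ)^s. -/
open Real MeasureTheory Set Filter Topology

lemma aux_cont {s : ℝ} : ContinuousOn (fun u : ℝ => (Real.exp (-u) - 1) / u ^ (1 + s)) (Ioi 0) :=
  ((continuous_exp.comp continuous_neg).continuousOn.sub continuousOn_const).div
    (continuousOn_id.rpow_const (fun x hx => Or.inl (ne_of_gt hx))) (fun x hx =>
      (Real.rpow_pos_of_pos hx (1+s)).ne')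

lemma aux_integrable {s : ℝ} (h0 : 0 < s) (h1 : s < 1) :
    IntegrableOn (fun u : ℝ => (Real.exp (-u) - 1) / u ^ (1 + s)) (Set.Ioi 0) volume := by
  have h01 : Ioc (0:ℝ) 1 ∪ Ioi 1 = Ioi 0 := Ioc_union_Ioi_eq_Ioi zero_le_one
  rw [← h01]
  apply MeasureTheory.IntegrableOn.union
  · -- near 0 : dominated by u ^ (-s)
    have hbound : IntegrableOn (fun u : ℝ => u ^ (-s)) (Ioc (0:ℝ) 1) volume := by
      rw [← intervalIntegrable_iff_integrableOn_Ioc_of_le zero_le_one]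
      exact intervalIntegral.intervalIntegrable_rpow' (by linarith)
    refine hbound.mono' ((aux_cont.mono Ioc_subset_Ioi_self).aestronglyMeasurable
      measurableSet_Ioc) ?_
    filter_upwards [ae_restrict_mem measurableSet_Ioc] with u hu
    have hu0 : (0:ℝ) < u := hu.1
    have h1' : |Real.exp (-u) - 1| ≤ u := by
      rw [abs_sub_comm, abs_of_nonneg (by simpa using Real.exp_le_one_iff.mpr (by linarith : -u ≤ 0))]
      have := Real.add_one_le_exp (-u)
      linarith
    have hpow : (0:ℝ) < u ^ (1+s) := Real.rpow_pos_of_pos hu0 _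
    rw [norm_div, Real.norm_eq_abs, Real.norm_eq_abs, abs_of_pos hpow, div_le_iff₀ hpow]
    calc |Real.exp (-u) - 1| ≤ u := h1'
      _ = u ^ (-s) * u ^ (1+s) := by
          rw [← Real.rpow_add hu0]
          norm_num
  · -- near ∞ : dominated by u ^ (-(1+s))
    have hbound : IntegrableOn (fun u : ℝ => u ^ (-(1+s))) (Ioi (1:ℝ)) volume :=
      integrableOn_Ioi_rpow_of_lt (by linarith) one_pos
    refine hbound.mono' ((aux_cont.mono (Ioi_subset_Ioi zero_le_one)).aestronglyMeasurable
      measurableSet_Ioi) ?_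
    filter_upwards [ae_restrict_mem measurableSet_Ioi] with u hu
    have hu0 : (0:ℝ) < u := lt_trans one_pos hu
    have hpow : (0:ℝ) < u ^ (1+s) := Real.rpow_pos_of_pos hu0 _
    rw [norm_div, Real.norm_eq_abs, Real.norm_eq_abs, abs_of_pos hpow,
      Real.rpow_neg hu0.le, div_le_iff₀ hpow, inv_mul_cancel₀ hpow.ne']
    have h1' : |Real.exp (-u) - 1| ≤ 1 := by
      rw [abs_sub_comm, abs_of_nonneg (by simpa using Real.exp_le_one_iff.mpr (by linarith : -u ≤ 0))]
      have := (Real.exp_pos (-u)).le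
      linarith
    exact h1'

lemma aux_integral {s : ℝ} (h0 : 0 < s) (h1 : s < 1) :
    ∫ u in Set.Ioi (0:ℝ), (Real.exp (-u) - 1) / u ^ (1 + s) = Real.Gamma (-s) := by
  set F : ℝ → ℝ := fun u => (1 - Real.exp (-u)) * u ^ (-s) / s with hF
  set g : ℝ → ℝ := fun u => Real.exp (-u) * u ^ (-s) / s with hg
  set h : ℝ → ℝ := fun u => (Real.exp (-u) - 1) / u ^ (1 + s) with hh
  have hF0 : F 0 = 0 := by simp [hF]
  have hderiv : ∀ u ∈ Ioi (0:ℝ), HasDerivAt F (h u + g u) u := by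
    intro u hu
    have hu0 : (0:ℝ) < u := hu
    have d1 : HasDerivAt (fun u : ℝ => 1 - Real.exp (-u)) (Real.exp (-u)) u := by
      simpa using ((Real.hasDerivAt_exp (-u)).comp u (hasDerivAt_neg u)).const_sub 1
    have d2 : HasDerivAt (fun u : ℝ => u ^ (-s)) (-s * u ^ (-s - 1)) u :=
      Real.hasDerivAt_rpow_const (Or.inl hu0.ne')
    have := (d1.mul d2).div_const s
    refine this.congr_deriv ?_
    have e1 : u ^ (-s - 1) = (u ^ (1 + s))⁻¹ := by
      rw [← Real.rpow_neg hu0.le]; ring_nf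
    have e2 : (u ^ (1 + s)) ≠ 0 := (Real.rpow_pos_of_pos hu0 _).ne'
    rw [e1]; simp only [h, g]
    field_simp
    ring
  have hcont : ContinuousWithinAt F (Ici (0:ℝ)) 0 := by
    rw [ContinuousWithinAt, hF0]
    apply squeeze_zero' (g := fun u : ℝ => u ^ (1 - s) / s)
    · filter_upwards [self_mem_nhdsWithin] with u hu
      rcases eq_or_lt_of_le (mem_Ici.mp hu) with h' | h'
      · simp [hF, ← h']
      · have hnn : (0:ℝ) ≤ 1 - Real.exp (-u) := by
          have : Real.exp (-u) ≤ 1 := Real.exp_le_one_iff.mpr (by linarith)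
          linarith
        exact div_nonneg (mul_nonneg hnn (Real.rpow_pos_of_pos h' _).le) h0.le
    · filter_upwards [self_mem_nhdsWithin] with u hu
      rcases eq_or_lt_of_le (mem_Ici.mp hu) with h' | h'
      · simp [hF, ← h', Real.zero_rpow (by linarith : 1 - s ≠ 0)]
      · have hle : 1 - Real.exp (-u) ≤ u := by
          have := Real.add_one_le_exp (-u); linarith
        have hnn : 0 ≤ 1 - Real.exp (-u) := by
          have : Real.exp (-u) ≤ 1 := Real.exp_le_one_iff.mpr (by linarith)
          linarith
        have hpos : (0:ℝ) < u ^ (-s) := Real.rpow_pos_of_pos h' _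
        have : (1 - Real.exp (-u)) * u ^ (-s) ≤ u * u ^ (-s) :=
          mul_le_mul_of_nonneg_right hle hpos.le
        have e : u * u ^ (-s) = u ^ (1 - s) := by
          nth_rewrite 1 [← Real.rpow_one u]
          rw [← Real.rpow_add h']; ring_nf
        simp only [hF, ← e]
        gcongr
    · have : ContinuousAt (fun u : ℝ => u ^ (1 - s)) 0 :=
        Real.continuousAt_rpow_const 0 (1 - s) (Or.inr (by linarith))
      have h2 : Tendsto (fun u : ℝ => u ^ (1 - s) / s) (nhdsWithin 0 (Ici 0))
          (𝓝 ((0:ℝ) ^ (1 - s) / s)) := (this.div_const s).continuousWithinAt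
      simpa [Real.zero_rpow (by linarith : 1 - s ≠ 0)] using h2
  have htop : Tendsto F atTop (𝓝 0) := by
    have t1 : Tendsto (fun u : ℝ => 1 - Real.exp (-u)) atTop (𝓝 1) := by
      simpa using Real.tendsto_exp_neg_atTop_nhds_zero.const_sub 1
    have t2 : Tendsto (fun u : ℝ => u ^ (-s)) atTop (𝓝 0) := tendsto_rpow_neg_atTop h0
    have := (t1.mul t2).div_const s
    simpa [hF] using this
  have hg_int : IntegrableOn g (Ioi (0:ℝ)) volume := by
    have h2 : IntegrableOn (fun x : ℝ => Real.exp (-x) * x ^ (1 - s - 1) / s) (Ioi 0) volume :=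
      (Real.GammaIntegral_convergent (by linarith : (0:ℝ) < 1 - s)).div_const s
    refine h2.congr_fun (fun u hu => ?_) measurableSet_Ioi
    simp [hg, show (1:ℝ) - s - 1 = -s by ring]
  have hh_int : IntegrableOn h (Ioi (0:ℝ)) volume := aux_integrable h0 h1
  have hsum := integral_Ioi_of_hasDerivAt_of_tendsto hcont hderiv (hh_int.add hg_int) htop
  rw [hF0, sub_zero] at hsum
  rw [integral_add hh_int hg_int] at hsum
  have hgval : ∫ u in Ioi (0:ℝ), g u = Real.Gamma (1 - s) / s := by
    rw [Real.Gamma_eq_integral (by linarith : (0:ℝ) < 1 - s), ← integral_div]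
    refine setIntegral_congr_fun measurableSet_Ioi (fun u hu => ?_)
    simp [hg, show (1:ℝ) - s - 1 = -s by ring]
  have hGamma : Real.Gamma (1 - s) = -s * Real.Gamma (-s) := by
    have := Real.Gamma_add_one (neg_ne_zero.mpr h0.ne')
    rw [show -s + 1 = 1 - s by ring] at this
    exact this
  have : ∫ u in Ioi (0:ℝ), h u = -(Real.Gamma (1 - s) / s) := by
    rw [hgval] at hsum; linarith
  rw [this, hGamma]
  field_simp

theorem bochner_scalar_integral (μ s : ℝ) (hμ : μ < 0) (hs : s ∈ Set.Ioo (0:ℝ) 1) :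
    IntegrableOn (fun t : ℝ => (Real.exp (μ * t) - 1) / t ^ (1 + s)) (Set.Ioi 0) volume ∧
    ∫ t in Set.Ioi (0:ℝ), (Real.exp (μ * t) - 1) / t ^ (1 + s) =
      Real.Gamma (-s) * (-μ) ^ s := by
  obtain ⟨h0, h1⟩ := hs
  set c := -μ with hc
  have hcpos : 0 < c := by rw [hc]; linarith
  set g : ℝ → ℝ := fun u => (Real.exp (-u) - 1) / u ^ (1 + s) with hg
  have key : ∀ t ∈ Ioi (0:ℝ), (Real.exp (μ * t) - 1) / t ^ (1 + s)
      = c ^ (1 + s) * g (c * t) := by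
    intro t ht
    have ht0 : (0:ℝ) < t := ht
    have e1 : (c * t) ^ (1 + s) = c ^ (1 + s) * t ^ (1 + s) := Real.mul_rpow hcpos.le ht0.le
    have e2 : -(c * t) = μ * t := by rw [hc]; ring
    have e3 : (t:ℝ) ^ (1 + s) ≠ 0 := (Real.rpow_pos_of_pos ht0 _).ne'
    have e4 : (c:ℝ) ^ (1 + s) ≠ 0 := (Real.rpow_pos_of_pos hcpos _).ne'
    rw [hg]; simp only [e2, e1]
    field_simp
  have hint : IntegrableOn (fun t : ℝ => c ^ (1 + s) * g (c * t)) (Ioi 0) volume := by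
    have := (integrableOn_Ioi_comp_mul_left_iff g 0 hcpos).mpr
      (by rw [mul_zero]; exact aux_integrable h0 h1)
    exact this.const_mul _
  refine ⟨hint.congr_fun (fun t ht => (key t ht).symm) measurableSet_Ioi, ?_⟩
  rw [setIntegral_congr_fun measurableSet_Ioi key, MeasureTheory.integral_const_mul,
    integral_comp_mul_left_Ioi g 0 hcpos, mul_zero, aux_integral h0 h1, smul_eq_mul,
    Real.rpow_add hcpos, Real.rpow_one]
  field_simp
end

section
/- Let A = P·diag(α₁,…,α_N)·P⁻¹ and B = Q·diag(β₁,…,β_M)·Q⁻¹ be diagonalizable real matrices with all eigenvalues α_i ≤ 0, β_j ≤ 0, let s ∈ (0,1), and let U be an N×M matrix. Define, for t > 0, V(t) = the unique solution of tV - AV - VBᵀ = U, and F(t) = -A·V(t) - V(t)·Bᵀ. Then (sin(πs)/π) ∫₀^∞ F(t) t^{s-1} dt = P·[((-Λ)^{∘s}) ∘ (P⁻¹·U·(Qᵀ)⁻¹)]·Qᵀ, where Λ is the N×M matrix with entries Λ_{ij} = α_i + β_j, (·)^{∘s} denotes entrywise power and ∘ the entrywise (Hadamard) product, provided all α_i +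 β_j < 0 (the rows/columns with α_i + β_j = 0 contribute 0 on both sides). -/
open Matrix Real MeasureTheory Set


lemma beta_val {s : ℝ} (hs0 : 0 < s) (hs1 : s < 1) :
    ∫ x in Ioo (0:ℝ) 1, x ^ (s-1) * (1-x) ^ (-s) = π / Real.sin (π * s) := by
  have h1 : Complex.Gamma s * Complex.Gamma (1 - s) =
      Complex.Gamma (s + (1 - s)) * Complex.betaIntegral s (1 - s) := by
    apply Complex.Gamma_mul_Gamma_eq_betaIntegral <;> simp [hs0, hs1]
  have h2 : Complex.betaIntegral s (1 - s) =
      ((∫ x in (0:ℝ)..1, x ^ (s-1) * (1-x) ^ (-s) : ℝ) : ℂ) := by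
    rw [Complex.betaIntegral, ← intervalIntegral.integral_ofReal]
    apply intervalIntegral.integral_congr
    intro x hx
    rw [uIcc_of_le (by norm_num : (0:ℝ) ≤ 1)] at hx
    obtain ⟨hx0, hx1⟩ := hx
    simp only []
    rw [Complex.ofReal_mul, Complex.ofReal_cpow hx0, Complex.ofReal_cpow (by linarith : (0:ℝ) ≤ 1 - x)]
    push_cast
    ring_nf
  have h3 : ((Real.Gamma s * Real.Gamma (1 - s) : ℝ) : ℂ) =
      ((∫ x in (0:ℝ)..1, x ^ (s-1) * (1-x) ^ (-s) : ℝ) : ℂ) := by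
    rw [← h2]
    push_cast [← Complex.Gamma_ofReal]
    rw [h1]
    norm_num [Complex.Gamma_one]
  have h4 := Complex.ofReal_injective h3
  rw [Real.Gamma_mul_Gamma_one_sub] at h4
  rw [intervalIntegral.integral_of_le (by norm_num : (0:ℝ) ≤ 1),
    integral_Ioc_eq_integral_Ioo] at h4
  exact h4.symm

lemma subst_val {s : ℝ} (hs0 : 0 < s) (hs1 : s < 1) :
    ∫ t in Ioi (0:ℝ), t ^ (s-1) / (1 + t) = π / Real.sin (π * s) := by
  have himg : (fun x : ℝ => x / (1 - x)) '' Ioo 0 1 = Ioi 0 := by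
    ext y
    constructor
    · rintro ⟨x, ⟨hx0, hx1⟩, rfl⟩
      exact div_pos hx0 (by linarith)
    · intro hy
      rw [mem_Ioi] at hy
      refine ⟨y / (1 + y), ⟨div_pos hy (by linarith), ?_⟩, ?_⟩
      · rw [div_lt_one (by linarith)]; linarith
      · have h1 : (1:ℝ) + y ≠ 0 := by linarith
        have h2 : 1 - y / (1 + y) = (1 + y)⁻¹ := by field_simp; ring
        simp only [h2]
        field_simp
  have hderiv : ∀ x ∈ Ioo (0:ℝ) 1, HasDerivWithinAt (fun x : ℝ => x / (1 - x))
      (((1 - x) ^ 2)⁻¹) (Ioo 0 1) x := by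
    intro x ⟨hx0, hx1⟩
    have h : HasDerivAt (fun x : ℝ => x / (1 - x))
        ((1 * (1 - x) - x * (0 - 1)) / (1 - x) ^ 2) x := by
      exact (hasDerivAt_id x).div ((hasDerivAt_const x 1).sub (hasDerivAt_id x))
        (by linarith)
    rw [show ((1 - x) ^ 2)⁻¹ = (1 * (1 - x) - x * (0 - 1)) / (1 - x) ^ 2 by ring]
    exact h.hasDerivWithinAt
  have hinj : InjOn (fun x : ℝ => x / (1 - x)) (Ioo 0 1) := by
    rintro a ⟨ha0, ha1⟩ b ⟨hb0, hb1⟩ hab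
    simp only at hab
    rw [div_eq_div_iff (by linarith) (by linarith)] at hab
    nlinarith
  rw [← himg, integral_image_eq_integral_abs_deriv_smul measurableSet_Ioo hderiv hinj
    (fun t => t ^ (s-1) / (1 + t))]
  rw [← beta_val hs0 hs1]
  apply setIntegral_congr_fun measurableSet_Ioo
  intro x ⟨hx0, hx1⟩
  have h1x : (0:ℝ) < 1 - x := by linarith
  have key : 1 + x / (1 - x) = (1 - x)⁻¹ := by field_simp; ring
  simp only [smul_eq_mul]
  rw [key, abs_of_nonneg (by positivity), Real.div_rpow hx0.le h1x.le, div_inv_eq_mul]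
  have e1 : (((1-x)^2 : ℝ))⁻¹ = (1-x)^(-2 : ℝ) := by
    rw [← Real.rpow_natCast (1-x) 2, ← Real.rpow_neg h1x.le]
    norm_num
  rw [e1, div_eq_mul_inv, ← Real.rpow_neg h1x.le]
  have e3 : (1-x)^(-2:ℝ) * (x^(s-1) * (1-x)^(-(s-1)) * (1-x)) =
      x^(s-1) * ((1-x)^(-2:ℝ) * (1-x)^(-(s-1)) * (1-x)^(1:ℝ)) := by
    rw [Real.rpow_one]; ring
  rw [e3, ← Real.rpow_add h1x, ← Real.rpow_add h1x]
  congr 1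
  ring

lemma integrable_aux {s b : ℝ} (hs0 : 0 < s) (hs1 : s < 1) (hb : 0 < b) :
    IntegrableOn (fun t : ℝ => t ^ (s-1) / (t + b)) (Ioi 0) := by
  have hcont : ContinuousOn (fun t : ℝ => t ^ (s-1) / (t + b)) (Ioi 0) := by
    apply ContinuousOn.div
    · exact continuousOn_id.rpow_const fun x hx => Or.inl (ne_of_gt hx)
    · exact (continuous_id.add continuous_const).continuousOn
    · intro x hx
      rw [mem_Ioi] at hx
      positivity
  have hmeas : AEStronglyMeasurable (fun t : ℝ => t ^ (s-1) / (t + b))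
      (volume.restrict (Ioi (0:ℝ))) := hcont.aestronglyMeasurable measurableSet_Ioi
  have h1 : IntegrableOn (fun t : ℝ => t ^ (s-1) / (t + b)) (Ioc 0 1) := by
    have hg : IntegrableOn (fun t : ℝ => t ^ (s-1) * b⁻¹) (Ioc 0 1) := by
      apply Integrable.mul_const
      exact (intervalIntegrable_iff_integrableOn_Ioc_of_le
        (by norm_num : (0:ℝ) ≤ 1)).mp (intervalIntegral.intervalIntegrable_rpow' (by linarith))
    apply Integrable.mono hg (hmeas.mono_set Ioc_subset_Ioi_self)
    rw [ae_restrict_iff' measurableSet_Ioc]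
    filter_upwards with t
    rintro ⟨ht0, ht1⟩
    rw [Real.norm_eq_abs, Real.norm_eq_abs, abs_of_nonneg (by positivity),
      abs_of_nonneg (by positivity), div_eq_mul_inv]
    apply mul_le_mul_of_nonneg_left _ (by positivity)
    apply inv_anti₀ hb
    linarith
  have h2 : IntegrableOn (fun t : ℝ => t ^ (s-1) / (t + b)) (Ioi 1) := by
    have hg : IntegrableOn (fun t : ℝ => t ^ (s-2)) (Ioi 1) :=
      integrableOn_Ioi_rpow_of_lt (by linarith) one_pos
    apply Integrable.mono hg (hmeas.mono_set (Ioi_subset_Ioi (by norm_num)))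
    rw [ae_restrict_iff' measurableSet_Ioi]
    filter_upwards with t
    intro ht
    rw [mem_Ioi] at ht
    have ht0 : (0:ℝ) < t := by linarith
    rw [Real.norm_eq_abs, Real.norm_eq_abs, abs_of_nonneg (by positivity),
      abs_of_nonneg (by positivity)]
    have : t ^ (s-2) = t ^ (s-1) / t := by
      rw [div_eq_mul_inv, ← Real.rpow_neg_one t, ← Real.rpow_add ht0]
      congr 1; ring
    rw [this, div_le_div_iff₀ (by linarith) ht0]
    have hrp : (0:ℝ) ≤ t ^ (s-1) := by positivity
    nlinarith
  have : Ioi (0:ℝ) = Ioc 0 1 ∪ Ioi 1 := by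
    rw [Ioc_union_Ioi_eq_Ioi (by norm_num)]
  rw [this]
  exact h1.union h2

lemma scaled_val {s b : ℝ} (hs0 : 0 < s) (hs1 : s < 1) (hb : 0 < b) :
    ∫ t in Ioi (0:ℝ), t ^ (s-1) / (t + b) = b ^ (s-1) * (π / Real.sin (π * s)) := by
  have key := MeasureTheory.integral_comp_mul_left_Ioi
    (fun t : ℝ => t ^ (s-1) / (t + b)) 0 hb
  rw [mul_zero] at key
  have congr1 : ∫ x in Ioi (0:ℝ), (b * x) ^ (s-1) / (b * x + b) =
      ∫ x in Ioi (0:ℝ), b ^ (s-1) * b⁻¹ * (x ^ (s-1) / (1 + x)) := by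
    apply setIntegral_congr_fun measurableSet_Ioi
    intro x hx
    rw [mem_Ioi] at hx
    simp only []
    rw [Real.mul_rpow hb.le hx.le]
    have : b * x + b = b * (1 + x) := by ring
    rw [this]
    field_simp
  rw [congr1, MeasureTheory.integral_const_mul, subst_val hs0 hs1] at key
  have h2 : ∫ t in Ioi (0:ℝ), t ^ (s-1) / (t + b) =
      b • (b ^ (s-1) * b⁻¹ * (π / Real.sin (π * s))) := by
    rw [key, smul_smul, mul_inv_cancel₀ hb.ne', one_smul]
  rw [h2, smul_eq_mul]
  have h3 : b * (b ^ (s-1) * b⁻¹ * (π / Real.sin (π * s))) =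
      b ^ (s-1) * (π / Real.sin (π * s)) * (b * b⁻¹) := by ring
  rw [h3, mul_inv_cancel₀ hb.ne', mul_one]


theorem balakrishnan_matrix_formula (N M : ℕ)
    (A P : Matrix (Fin N) (Fin N) ℝ) (B Q : Matrix (Fin M) (Fin M) ℝ)
    (α : Fin N → ℝ) (β : Fin M → ℝ)
    (hP : IsUnit P.det) (hQ : IsUnit Q.det)
    (hA : A = P * Matrix.diagonal α * P⁻¹) (hB : B = Q * Matrix.diagonal β * Q⁻¹)
    (hα : ∀ i, α i ≤ 0) (hβ : ∀ j, β j ≤ 0)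
    (hαβ : ∀ i j, α i + β j < 0)
    (s : ℝ) (hs : s ∈ Set.Ioo (0:ℝ) 1)
    (U : Matrix (Fin N) (Fin M) ℝ)
    (V : ℝ → Matrix (Fin N) (Fin M) ℝ)
    (hV : ∀ t : ℝ, 0 < t → t • V t - A * V t - V t * Bᵀ = U)
    (F : ℝ → Matrix (Fin N) (Fin M) ℝ)
    (hF : ∀ t : ℝ, 0 < t → F t = -(A * V t) - V t * Bᵀ) :
    ∀ i j,
      (Real.sin (π * s) / π) * ∫ t in Ioi (0:ℝ), F t i j * t ^ (s - 1) =
        (P * Matrix.of (fun i j =>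
          (-(α i + β j)) ^ s * (P⁻¹ * U * (Qᵀ)⁻¹) i j) * Qᵀ) i j := by
  obtain ⟨hs0, hs1⟩ := hs
  intro i j
  have hQt : IsUnit (Qᵀ).det := by rwa [Matrix.det_transpose]
  have hsin : 0 < Real.sin (π * s) := by
    apply Real.sin_pos_of_pos_of_lt_pi (by positivity)
    nlinarith [Real.pi_pos]
  have hbpos : ∀ (k : Fin N) (l : Fin M), 0 < -(α k + β l) := by
    intro k l; have := hαβ k l; linarith
  -- pointwise formula for the integrand
  have hFentry : ∀ t ∈ Ioi (0:ℝ), F t i j * t ^ (s-1) = ∑ l : Fin M, ∑ k : Fin N,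
      (P i k * Qᵀ l j * ((P⁻¹ * U * (Qᵀ)⁻¹) k l) * (-(α k + β l))) *
        (t ^ (s-1) / (t + -(α k + β l))) := by
    intro t ht
    rw [mem_Ioi] at ht
    set Ut := P⁻¹ * U * (Qᵀ)⁻¹ with hUt
    set W := P⁻¹ * V t * (Qᵀ)⁻¹ with hWdef
    have hBt : Bᵀ = (Qᵀ)⁻¹ * Matrix.diagonal β * Qᵀ := by
      rw [hB]
      simp [Matrix.transpose_mul, Matrix.transpose_nonsing_inv, Matrix.diagonal_transpose,
        Matrix.mul_assoc]
    have hconj : t • W - Matrix.diagonal α * W - W * Matrix.diagonal β = Ut := by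
      have h0 := hV t ht
      have : P⁻¹ * (t • V t - A * V t - V t * Bᵀ) * (Qᵀ)⁻¹ =
          t • W - Matrix.diagonal α * W - W * Matrix.diagonal β := by
        rw [hA, hBt]
        simp only [Matrix.mul_sub, Matrix.sub_mul, Matrix.mul_smul, Matrix.smul_mul,
          Matrix.mul_assoc, Matrix.nonsing_inv_mul_cancel_left _ _ hP,
          Matrix.mul_nonsing_inv _ hQt, Matrix.mul_one, hWdef]
      rw [← this, h0]
    have hWkl : ∀ k l, W k l = Ut k l / (t + -(α k + β l)) := by
      intro k l
      have h1 := congrFun (congrFun hconj k) l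
      have hb : 0 < t + -(α k + β l) := by have := hαβ k l; linarith
      simp only [Matrix.sub_apply, Matrix.smul_apply, Matrix.diagonal_mul, Matrix.mul_diagonal,
        smul_eq_mul] at h1
      rw [eq_div_iff hb.ne']
      linear_combination h1
    have hFt : F t = P * (Ut - t • W) * Qᵀ := by
      have hV2 : V t = P * W * Qᵀ := by
        rw [hWdef]
        simp only [← Matrix.mul_assoc]
        rw [Matrix.mul_nonsing_inv _ hP, Matrix.one_mul,
          Matrix.nonsing_inv_mul_cancel_right _ _ hQt]
      have hU2 : U = P * Ut * Qᵀ := by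
        rw [hUt]
        simp only [← Matrix.mul_assoc]
        rw [Matrix.mul_nonsing_inv _ hP, Matrix.one_mul,
          Matrix.nonsing_inv_mul_cancel_right _ _ hQt]
      have h3 : F t = U - t • V t := by
        rw [hF t ht, ← hV t ht]; abel
      rw [h3, hU2, hV2, Matrix.mul_sub, Matrix.sub_mul]
      congr 1
      rw [Matrix.mul_smul, Matrix.smul_mul]
    have hFij : F t i j = ∑ l : Fin M, ∑ k : Fin N, P i k * (Ut k l - t * W k l) * Qᵀ l j := by
      rw [hFt, Matrix.mul_apply]
      apply Finset.sum_congr rfl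
      intro l _
      rw [Matrix.mul_apply, Finset.sum_mul]
      apply Finset.sum_congr rfl
      intro k _
      simp [Matrix.sub_apply, Matrix.smul_apply]
    rw [hFij, Finset.sum_mul]
    apply Finset.sum_congr rfl
    intro l _
    rw [Finset.sum_mul]
    apply Finset.sum_congr rfl
    intro k _
    rw [hWkl k l]
    have hb : 0 < t + -(α k + β l) := by have := hαβ k l; linarith
    have key : Ut k l - t * (Ut k l / (t + -(α k + β l))) =
        Ut k l * (-(α k + β l)) / (t + -(α k + β l)) := by
      rw [eq_div_iff hb.ne', sub_mul, mul_assoc, div_mul_cancel₀ _ hb.ne']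
      ring
    rw [key]
    field_simp
  rw [setIntegral_congr_fun measurableSet_Ioi hFentry]
  rw [integral_finset_sum _ (fun l _ => ?_)]
  swap
  · apply integrable_finset_sum
    intro k _
    exact (integrable_aux hs0 hs1 (hbpos k l)).const_mul _
  rw [Finset.sum_congr rfl (fun l _ => integral_finset_sum _
    (fun k _ => (integrable_aux hs0 hs1 (hbpos k l)).const_mul _))]
  simp only [MeasureTheory.integral_const_mul, scaled_val hs0 hs1 (hbpos _ _)]
  rw [Matrix.mul_apply]
  rw [Finset.mul_sum]
  apply Finset.sum_congr rfl
  intro l _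
  rw [Matrix.mul_apply, Finset.sum_mul, Finset.mul_sum]
  apply Finset.sum_congr rfl
  intro k _
  simp only [Matrix.of_apply]
  have hb := hbpos k l
  have hpow : (-(α k + β l)) ^ s = -(α k + β l) * (-(α k + β l)) ^ (s - 1) := by
    rw [show s = 1 + (s - 1) by ring, Real.rpow_add hb, Real.rpow_one]
    ring_nf
  rw [hpow]
  field_simp
end

section
/- Let A = P·diag(α₁,…,α_N)·P⁻¹ and B = Q·diag(β₁,…,β_M)·Q⁻¹ be diagonalizable real matrices with eigenvalues α_i ≤ 0, β_j ≤ 0 and suppose α_i + β_j < 0 for all i, j. Let s ∈ (0,1) and U be N×M. Then (1/Γ(-s)) ∫₀^∞ (e^{tA}·U·e^{tBᵀ} - U) t^{-1-s} dt = P·[((-Λ)^{∘s}) ∘ (P⁻¹·U·(Qᵀ)⁻¹)]·Qᵀ, where Λ_{ij} = α_i + β_j; i.e., the Bochner-type and Balakrishnan-type matrix formulas give the same result. -/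
open Matrix Real MeasureTheory Set

open Filter Topology

lemma integ_aux {c s : ℝ} (hc : 0 < c) (hs0 : 0 < s) (hs1 : s < 1) :
    IntegrableOn (fun t : ℝ => (Real.exp (-(c * t)) - 1) * t ^ (-1 - s)) (Ioi 0) := by
  have hmeas : ∀ (S : Set ℝ), S ⊆ Ioi 0 → MeasurableSet S →
      AEStronglyMeasurable (fun t : ℝ => (Real.exp (-(c * t)) - 1) * t ^ (-1 - s))
        (volume.restrict S) := by
    intro S hS hSm
    refine ContinuousOn.aestronglyMeasurable ?_ hSm
    refine ContinuousOn.mul (Continuous.continuousOn (by continuity)) ?_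
    exact fun x hx => (Real.continuousAt_rpow_const x _ (Or.inl (ne_of_gt (hS hx)))).continuousWithinAt
  rw [← Ioc_union_Ioi_eq_Ioi (zero_le_one)]
  refine IntegrableOn.union ?_ ?_
  · have hbound : IntegrableOn (fun t : ℝ => c * t ^ (-s)) (Ioc (0:ℝ) 1) := by
      refine Integrable.const_mul ?_ c
      have := intervalIntegral.intervalIntegrable_rpow' (a := (0:ℝ)) (b := 1) (r := -s)
        (by linarith)
      rwa [intervalIntegrable_iff_integrableOn_Ioc_of_le zero_le_one] at this
    refine Integrable.mono hbound (hmeas _ (fun x hx => hx.1) measurableSet_Ioc) ?_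
    filter_upwards [ae_restrict_mem measurableSet_Ioc] with t ht
    have ht0 : 0 < t := ht.1
    rw [norm_mul, Real.norm_eq_abs, Real.norm_eq_abs, Real.norm_eq_abs,
      abs_of_nonneg (Real.rpow_nonneg ht0.le _), abs_of_nonneg (by positivity : (0:ℝ) ≤ c * t ^ (-s))]
    have h1 : |Real.exp (-(c * t)) - 1| ≤ c * t := by
      rw [abs_sub_comm, abs_of_nonneg (by simp [Real.exp_le_one_iff]; positivity)]
      have := Real.add_one_le_exp (-(c * t))
      linarith
    calc |Real.exp (-(c * t)) - 1| * t ^ (-1 - s) ≤ (c * t) * t ^ (-1 - s) := by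
          apply mul_le_mul_of_nonneg_right h1 (Real.rpow_nonneg ht0.le _)
      _ = c * t ^ (-s) := by
          rw [mul_assoc]
          congr 1
          nth_rewrite 1 [← Real.rpow_one t]
          rw [← Real.rpow_add ht0]
          ring_nf
  · have hbound : IntegrableOn (fun t : ℝ => t ^ (-1 - s)) (Ioi (1:ℝ)) :=
      integrableOn_Ioi_rpow_of_lt (by linarith) one_pos
    refine Integrable.mono hbound (hmeas _ (fun x hx => mem_Ioi.mpr (lt_trans one_pos (mem_Ioi.mp hx))) measurableSet_Ioi) ?_
    filter_upwards [ae_restrict_mem measurableSet_Ioi] with t ht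
    have ht0 : (0:ℝ) < t := lt_trans one_pos ht
    rw [norm_mul, Real.norm_eq_abs, Real.norm_eq_abs,
      abs_of_nonneg (Real.rpow_nonneg ht0.le _)]
    have h1 : |Real.exp (-(c * t)) - 1| ≤ 1 := by
      rw [abs_sub_comm, abs_of_nonneg (by simp [Real.exp_le_one_iff]; positivity)]
      have := Real.exp_pos (-(c * t))
      linarith
    nlinarith [Real.rpow_nonneg ht0.le (-1 - s)]

lemma key_one {s : ℝ} (hs0 : 0 < s) (hs1 : s < 1) :
    ∫ t in Ioi (0:ℝ), (Real.exp (-t) - 1) * t ^ (-1 - s) = Real.Gamma (-s) := by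
  set F : ℝ → ℝ := fun t => (1 - Real.exp (-t)) * t ^ (-s) with hF
  set F' : ℝ → ℝ := fun t =>
    Real.exp (-t) * t ^ (-s) - s * ((1 - Real.exp (-t)) * t ^ (-1 - s)) with hF'
  have hderiv : ∀ x ∈ Ioi (0:ℝ), HasDerivAt F (F' x) x := by
    intro x hx
    have h1 : HasDerivAt (fun t : ℝ => 1 - Real.exp (-t)) (Real.exp (-x)) x := by
      have : HasDerivAt (fun t : ℝ => Real.exp (-t)) (Real.exp (-x) * (-1)) x :=
        (Real.hasDerivAt_exp (-x)).comp x (by simpa using (hasDerivAt_neg x))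
      simpa using (this.const_sub 1)
    have h2 : HasDerivAt (fun t : ℝ => t ^ (-s)) (-s * x ^ (-s - 1)) x :=
      Real.hasDerivAt_rpow_const (Or.inl (ne_of_gt hx))
    have : HasDerivAt (fun t : ℝ => (1 - Real.exp (-t)) * t ^ (-s))
        (Real.exp (-x) * x ^ (-s) + (1 - Real.exp (-x)) * (-s * x ^ (-s - 1))) x := h1.mul h2
    convert this using 1
    rw [hF', show (-s - 1 : ℝ) = -1 - s by ring]
    ring
  have hint1 : IntegrableOn (fun x : ℝ => Real.exp (-x) * x ^ (-s)) (Ioi 0) := by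
    have := Real.GammaIntegral_convergent (s := 1 - s) (by linarith)
    simpa [show (1 - s - 1 : ℝ) = -s by ring] using this
  have hint2 : IntegrableOn (fun t : ℝ => (Real.exp (-t) - 1) * t ^ (-1 - s)) (Ioi 0) := by
    simpa using integ_aux one_pos hs0 hs1
  have f'int : IntegrableOn F' (Ioi 0) := by
    refine Integrable.sub hint1 ?_
    have : IntegrableOn (fun t : ℝ => s * -((Real.exp (-t) - 1) * t ^ (-1 - s))) (Ioi 0) :=
      (hint2.neg).const_mul s
    refine this.congr_fun (fun t _ => by ring) measurableSet_Ioi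
  have hcont : ContinuousWithinAt F (Ici (0:ℝ)) 0 := by
    have hF0 : F 0 = 0 := by simp [hF]
    rw [ContinuousWithinAt, hF0]
    have hb : Tendsto (fun x : ℝ => x ^ (1 - s)) (nhdsWithin 0 (Ici (0:ℝ))) (𝓝 0) := by
      have : ContinuousAt (fun x : ℝ => x ^ (1 - s)) 0 :=
        Real.continuousAt_rpow_const 0 (1 - s) (Or.inr (by linarith))
      have := this.continuousWithinAt (s := Ici (0:ℝ))
      rwa [ContinuousWithinAt, Real.zero_rpow (by linarith : (1:ℝ) - s ≠ 0)] at this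
    refine squeeze_zero_norm' ?_ hb
    filter_upwards [self_mem_nhdsWithin] with x (hx : 0 ≤ x)
    rcases eq_or_lt_of_le hx with h|h
    · simp [hF, ← h, Real.zero_rpow (by linarith : -s ≠ 0),
        Real.zero_rpow (by linarith : (1:ℝ) - s ≠ 0)]
    · rw [Real.norm_eq_abs, hF, abs_mul, abs_of_nonneg (Real.rpow_nonneg hx _),
        abs_of_nonneg (by simp [Real.exp_le_one_iff]; positivity)]
      have h1 : 1 - Real.exp (-x) ≤ x := by
        have := Real.add_one_le_exp (-x); linarith
      calc (1 - Real.exp (-x)) * x ^ (-s) ≤ x * x ^ (-s) :=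
            mul_le_mul_of_nonneg_right h1 (Real.rpow_nonneg hx _)
        _ = x ^ (1 - s) := by
            nth_rewrite 1 [← Real.rpow_one x]
            rw [← Real.rpow_add h]; ring_nf
  have hlim : Tendsto F atTop (𝓝 0) := by
    have h1 : Tendsto (fun t : ℝ => 1 - Real.exp (-t)) atTop (𝓝 1) := by
      have : Tendsto (fun t : ℝ => Real.exp (-t)) atTop (𝓝 0) := Real.tendsto_exp_neg_atTop_nhds_zero
      simpa using (tendsto_const_nhds (x := (1:ℝ)) (f := atTop)).sub this
    have h2 : Tendsto (fun t : ℝ => t ^ (-s)) atTop (𝓝 0) := tendsto_rpow_neg_atTop hs0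
    simpa using h1.mul h2
  have hFTC := integral_Ioi_of_hasDerivAt_of_tendsto hcont hderiv f'int hlim
  have hF0 : F 0 = 0 := by simp [hF]
  rw [hF0, sub_zero] at hFTC
  have hsplit : ∫ x in Ioi (0:ℝ), F' x =
      (∫ x in Ioi (0:ℝ), Real.exp (-x) * x ^ (-s)) -
        s * ∫ t in Ioi (0:ℝ), (1 - Real.exp (-t)) * t ^ (-1 - s) := by
    rw [hF']
    rw [integral_sub hint1 (by
      have : IntegrableOn (fun t : ℝ => s * -((Real.exp (-t) - 1) * t ^ (-1 - s))) (Ioi 0) :=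
        (hint2.neg).const_mul s
      exact this.congr_fun (fun t _ => by ring) measurableSet_Ioi)]
    rw [MeasureTheory.integral_const_mul]
  have hGamma1 : ∫ x in Ioi (0:ℝ), Real.exp (-x) * x ^ (-s) = Real.Gamma (1 - s) := by
    rw [Real.Gamma_eq_integral (by linarith : (0:ℝ) < 1 - s)]
    simp [show (1 - s - 1 : ℝ) = -s by ring]
  have hneg : ∫ t in Ioi (0:ℝ), (1 - Real.exp (-t)) * t ^ (-1 - s) =
      -∫ t in Ioi (0:ℝ), (Real.exp (-t) - 1) * t ^ (-1 - s) := by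
    rw [← integral_neg]
    exact setIntegral_congr_fun measurableSet_Ioi (fun t _ => by ring)
  rw [hsplit, hGamma1, hneg] at hFTC
  have hGadd : Real.Gamma (1 - s) = -s * Real.Gamma (-s) := by
    have := Real.Gamma_add_one (s := -s) (by linarith)
    rw [show (-s + 1 : ℝ) = 1 - s by ring] at this
    exact this
  rw [hGadd] at hFTC
  have : s * ∫ t in Ioi (0:ℝ), (Real.exp (-t) - 1) * t ^ (-1 - s) = s * Real.Gamma (-s) := by
    linarith
  exact mul_left_cancel₀ (by linarith) this

lemma key_int {c s : ℝ} (hc : 0 < c) (hs0 : 0 < s) (hs1 : s < 1) :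
    ∫ t in Ioi (0:ℝ), (Real.exp (-(c * t)) - 1) * t ^ (-1 - s) = Real.Gamma (-s) * c ^ s := by
  have h := integral_comp_mul_left_Ioi (fun x : ℝ => (Real.exp (-x) - 1) * x ^ (-1 - s)) 0 hc
  rw [mul_zero, key_one hs0 hs1, smul_eq_mul] at h
  have hL : (∫ x in Ioi (0:ℝ), (Real.exp (-(c * x)) - 1) * (c * x) ^ (-1 - s)) =
      c ^ (-1 - s) * ∫ t in Ioi (0:ℝ), (Real.exp (-(c * t)) - 1) * t ^ (-1 - s) := by
    rw [← MeasureTheory.integral_const_mul]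
    refine setIntegral_congr_fun measurableSet_Ioi (fun x hx => ?_)
    rw [Real.mul_rpow hc.le (le_of_lt hx)]
    ring
  rw [hL] at h
  have hc1 : c ^ (-1 - s : ℝ) ≠ 0 := by positivity
  have hpow : c ^ (-1 - s : ℝ) * (Real.Gamma (-s) * c ^ s) = c⁻¹ * Real.Gamma (-s) := by
    rw [show c ^ (-1 - s : ℝ) * (Real.Gamma (-s) * c ^ s)
        = (c ^ (-1 - s : ℝ) * c ^ (s : ℝ)) * Real.Gamma (-s) by ring,
      ← Real.rpow_add hc, show (-1 - s + s : ℝ) = -1 by ring, Real.rpow_neg_one]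
  exact mul_left_cancel₀ hc1 (by rw [h, hpow])


theorem bochner_matrix_formula (N M : ℕ)
    (A P : Matrix (Fin N) (Fin N) ℝ) (B Q : Matrix (Fin M) (Fin M) ℝ)
    (α : Fin N → ℝ) (β : Fin M → ℝ)
    (hP : IsUnit P.det) (hQ : IsUnit Q.det)
    (hA : A = P * Matrix.diagonal α * P⁻¹) (hB : B = Q * Matrix.diagonal β * Q⁻¹)
    (hα : ∀ i, α i ≤ 0) (hβ : ∀ j, β j ≤ 0)
    (hαβ : ∀ i j, α i + β j < 0)
    (s : ℝ) (hs : s ∈ Set.Ioo (0:ℝ) 1)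
    (U : Matrix (Fin N) (Fin M) ℝ) :
    ∀ i j,
      (1 / Real.Gamma (-s)) * ∫ t in Ioi (0:ℝ),
          (NormedSpace.exp (t • A) * U * NormedSpace.exp (t • Bᵀ) - U) i j * t ^ (-1 - s) =
        (P * Matrix.of (fun i j =>
          (-(α i + β j)) ^ s * (P⁻¹ * U * (Qᵀ)⁻¹) i j) * Qᵀ) i j := by
  obtain ⟨hs0, hs1⟩ := hs
  have hPu : IsUnit P := (Matrix.isUnit_iff_isUnit_det P).mpr hP
  have hQTdet : IsUnit (Qᵀ).det := by rwa [Matrix.det_transpose]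
  have hQTu : IsUnit Qᵀ := (Matrix.isUnit_iff_isUnit_det Qᵀ).mpr hQTdet
  set V : Matrix (Fin N) (Fin M) ℝ := P⁻¹ * U * (Qᵀ)⁻¹ with hV
  have hexpA : ∀ t : ℝ, NormedSpace.exp (t • A)
      = P * Matrix.diagonal (fun k => Real.exp (t * α k)) * P⁻¹ := by
    intro t
    have h1 : t • A = P * (t • Matrix.diagonal α) * P⁻¹ := by
      rw [hA, mul_smul_comm, smul_mul_assoc]
    rw [h1, Matrix.exp_conj P (t • Matrix.diagonal α) hPu]
    congr 2
    rw [← Matrix.diagonal_smul, Matrix.exp_diagonal, Pi.exp_def]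
    congr 1
    funext k
    simp [← Real.exp_eq_exp_ℝ]
  have hBT : Bᵀ = (Qᵀ)⁻¹ * Matrix.diagonal β * Qᵀ := by
    rw [hB, Matrix.transpose_mul, Matrix.transpose_mul, Matrix.diagonal_transpose,
      Matrix.transpose_nonsing_inv, Matrix.mul_assoc]
  have hexpB : ∀ t : ℝ, NormedSpace.exp (t • Bᵀ)
      = (Qᵀ)⁻¹ * Matrix.diagonal (fun l => Real.exp (t * β l)) * Qᵀ := by
    intro t
    have h1 : t • Bᵀ = (Qᵀ)⁻¹ * (t • Matrix.diagonal β) * Qᵀ := by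
      rw [hBT, mul_smul_comm, smul_mul_assoc]
    rw [h1, Matrix.exp_conj' Qᵀ (t • Matrix.diagonal β) hQTu]
    congr 2
    rw [← Matrix.diagonal_smul, Matrix.exp_diagonal, Pi.exp_def]
    congr 1
    funext l
    simp [← Real.exp_eq_exp_ℝ]
  have hU : P * V * Qᵀ = U := by
    rw [hV, Matrix.mul_assoc (P⁻¹) U ((Qᵀ)⁻¹), Matrix.mul_nonsing_inv_cancel_left _ _ hP,
      Matrix.mul_assoc, Matrix.nonsing_inv_mul _ hQTdet, Matrix.mul_one]
  have hkey : ∀ t : ℝ, NormedSpace.exp (t • A) * U * NormedSpace.exp (t • Bᵀ) - U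
      = P * Matrix.of (fun k l => (Real.exp (t * (α k + β l)) - 1) * V k l) * Qᵀ := by
    intro t
    rw [hexpA t, hexpB t]
    have hmid : Matrix.of (fun k l => (Real.exp (t * (α k + β l)) - 1) * V k l)
        = Matrix.diagonal (fun k => Real.exp (t * α k)) * V *
            Matrix.diagonal (fun l => Real.exp (t * β l)) - V := by
      ext k l
      simp only [Matrix.of_apply, Matrix.sub_apply, Matrix.mul_diagonal, Matrix.diagonal_mul,
        mul_add, Real.exp_add]
      ring
    rw [hmid, Matrix.mul_sub, Matrix.sub_mul, hU]
    congr 1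
    simp only [hV, Matrix.mul_assoc]
  intro i j
  have hΓ : Real.Gamma (-s) ≠ 0 := by
    refine Real.Gamma_ne_zero (fun m => ?_)
    rcases m with _ | m
    · simp only [Nat.cast_zero, neg_zero]; linarith
    · push_cast
      intro h
      have : (0:ℝ) ≤ m := Nat.cast_nonneg m
      nlinarith
  have hentry : ∀ t : ℝ,
      (NormedSpace.exp (t • A) * U * NormedSpace.exp (t • Bᵀ) - U) i j * t ^ (-1 - s)
      = ∑ l : Fin M, ∑ k : Fin N,
          (P i k * Qᵀ l j * V k l) * ((Real.exp (-(-(α k + β l) * t)) - 1) * t ^ (-1 - s)) := by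
    intro t
    rw [hkey t, Matrix.mul_apply, Finset.sum_mul]
    refine Finset.sum_congr rfl (fun l _ => ?_)
    rw [Matrix.mul_apply, Finset.sum_mul, Finset.sum_mul]
    refine Finset.sum_congr rfl (fun k _ => ?_)
    simp only [Matrix.of_apply]
    rw [show -(-(α k + β l) * t) = t * (α k + β l) by ring]
    ring
  have hInt : ∀ (k : Fin N) (l : Fin M),
      Integrable (fun t : ℝ =>
        (P i k * Qᵀ l j * V k l) * ((Real.exp (-(-(α k + β l) * t)) - 1) * t ^ (-1 - s)))
        (volume.restrict (Ioi 0)) := by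
    intro k l
    exact (integ_aux (by linarith [hαβ k l] : 0 < -(α k + β l)) hs0 hs1).const_mul _
  simp only [hentry]
  rw [MeasureTheory.integral_finset_sum _
    (fun l _ => integrable_finset_sum _ (fun k _ => hInt k l))]
  have hval : ∀ l : Fin M,
      (∫ t in Ioi (0:ℝ), ∑ k : Fin N,
        (P i k * Qᵀ l j * V k l) * ((Real.exp (-(-(α k + β l) * t)) - 1) * t ^ (-1 - s)))
      = ∑ k : Fin N, (P i k * Qᵀ l j * V k l) * (Real.Gamma (-s) * (-(α k + β l)) ^ s) := by
    intro l
    rw [MeasureTheory.integral_finset_sum _ (fun k _ => hInt k l)]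
    refine Finset.sum_congr rfl (fun k _ => ?_)
    rw [MeasureTheory.integral_const_mul, key_int (by linarith [hαβ k l]) hs0 hs1]
  simp only [hval]
  have hRHS : (P * Matrix.of (fun k l => (-(α k + β l)) ^ s * V k l) * Qᵀ) i j
      = ∑ l : Fin M, ∑ k : Fin N, P i k * ((-(α k + β l)) ^ s * V k l) * Qᵀ l j := by
    rw [Matrix.mul_apply]
    refine Finset.sum_congr rfl (fun l _ => ?_)
    rw [Matrix.mul_apply, Finset.sum_mul]
    simp only [Matrix.of_apply]
  rw [hRHS, Finset.mul_sum]
  refine Finset.sum_congr rfl (fun l _ => ?_)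
  rw [Finset.mul_sum]
  refine Finset.sum_congr rfl (fun k _ => ?_)
  field_simp
end
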